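/- Let p be an odd prime, e ≥ 1, and define b_j ∈ Sym(ℤ/p^eℤ) by b_j(x) = Σ_{i=0}^{x-1} (p+1)^(ij) (mod p^e). Then b_j is a bijection of ℤ/p^eℤ fixing 0, and conjugation satisfies b_j ∘ t ∘ b_j⁻¹ = t ∘ a^j, where t(x) = x+1 and a(x) = (p+1)x. -/
import Mathlib

open Finset in
private lemma geomF_add (c m d : ℕ) :
    ∑ i ∈ range (m + d), c ^ i
      = (∑ i ∈ range m, c ^ i) + c ^ m * ∑ i ∈ range d, c ^ i := by
  rw [Finset.sum_range_add, Finset.mul_sum]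
  simp [pow_add]

open Finset in
private lemma geomF_mul (c : ℕ) (hc : 1 ≤ c) (n : ℕ) :
    (∑ i ∈ range n, c ^ i) * (c - 1) = c ^ n - 1 := by
  induction n with
  | zero => simp
  | succ n ih =>
    rw [Finset.sum_range_succ, add_mul, ih, pow_succ, Nat.mul_sub_one]
    have h1 : 1 ≤ c ^ n := Nat.one_le_pow _ _ (by omega)
    have h2 : c ^ n ≤ c ^ n * c := Nat.le_mul_of_pos_right _ (by omega)
    omega

open Finset in
private lemma geomF_dvd (p e : ℕ) (hp : p.Prime) (hodd : Odd p) (j d : ℕ) :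
    p ^ e ∣ ∑ i ∈ range d, ((p + 1) ^ j) ^ i ↔ p ^ e ∣ d := by
  haveI : Fact p.Prime := ⟨hp⟩
  have hp2 : 2 ≤ p := hp.two_le
  have hpne2 : p ≠ 2 := by
    rintro rfl
    exact ((Nat.not_odd_iff_even.mpr even_two)) hodd
  have hp3 : 3 ≤ p := by omega
  rcases Nat.eq_zero_or_pos j with rfl | hj
  · simp
  rcases Nat.eq_zero_or_pos d with rfl | hd
  · simp
  set c := (p + 1) ^ j with hcdef
  have hc1 : 1 < c := Nat.one_lt_pow hj.ne' (by omega)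
  have hmod : c ≡ 1 [MOD p] := by
    have h1 : (p + 1) ≡ 1 [MOD p] := (Nat.add_mod_left p 1 : (p + 1) % p = 1 % p)
    simpa using h1.pow j
  have hcmod : c % p = 1 := by
    have h := hmod
    unfold Nat.ModEq at h
    rwa [Nat.one_mod_eq_one.mpr (by omega)] at h
  have hxy : p ∣ c - 1 := (Nat.modEq_iff_dvd' hc1.le).mp hmod.symm
  have hx : ¬ p ∣ c := by
    intro h
    rw [Nat.dvd_iff_mod_eq_zero] at h
    omega
  have hF0 : 0 < ∑ i ∈ range d, c ^ i := by
    apply Finset.sum_pos (fun i _ => pow_pos (by omega) i)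
    exact ⟨0, Finset.mem_range.mpr hd⟩
  have hlte : padicValNat p (c ^ d - 1 ^ d) = padicValNat p (c - 1) + padicValNat p d :=
    padicValNat.pow_sub_pow hodd hc1 (by simpa using hxy) hx hd.ne'
  have hmul : padicValNat p ((∑ i ∈ range d, c ^ i) * (c - 1))
      = padicValNat p (∑ i ∈ range d, c ^ i) + padicValNat p (c - 1) :=
    padicValNat.mul hF0.ne' (by omega)
  rw [geomF_mul c hc1.le d] at hmul
  rw [one_pow] at hlte
  have hval : padicValNat p (∑ i ∈ range d, c ^ i) = padicValNat p d := by omega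
  rw [padicValNat_dvd_iff_le hF0.ne', padicValNat_dvd_iff_le hd.ne', hval]

/-- The map `b_j x = Σ_{i < x} (p+1)^(i·j)` on `ℤ/p^eℤ` is a bijection fixing `0`
which conjugates the translation `t : x ↦ x + 1` to `t ∘ a^j`, where
`a x = (p+1) * x`. -/
theorem stmt_9 (p e : ℕ) (hp : p.Prime) (hodd : Odd p) (he : 1 ≤ e)
    (a : Equiv.Perm (ZMod (p ^ e))) (ha : ∀ w : ZMod (p ^ e), a w = (p + 1) * w)
    (j : ℕ) :
    ∃ b : Equiv.Perm (ZMod (p ^ e)),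
      (∀ x : ZMod (p ^ e),
        b x = ∑ i ∈ Finset.range x.val, ((p : ZMod (p ^ e)) + 1) ^ (i * j)) ∧
      b 0 = 0 ∧
      b * Equiv.addLeft (1 : ZMod (p ^ e)) * b⁻¹ =
        Equiv.addLeft (1 : ZMod (p ^ e)) * a ^ j := by
  haveI : Fact p.Prime := ⟨hp⟩
  haveI : NeZero (p ^ e) := ⟨pow_ne_zero e hp.ne_zero⟩
  set c : ℕ := (p + 1) ^ j with hcdef
  set F : ℕ → ℕ := fun n => ∑ i ∈ Finset.range n, c ^ i with hFdef
  have hFadd : ∀ m d, F (m + d) = F m + c ^ m * F d := fun m d => geomF_add c m d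
  have hFdvd : ∀ d, p ^ e ∣ F d ↔ p ^ e ∣ d := fun d => geomF_dvd p e hp hodd j d
  set f : ZMod (p ^ e) → ZMod (p ^ e) := fun x => ((F x.val : ℕ) : ZMod (p ^ e))
    with hfdef
  have hcast : ∀ m : ℕ, ((F m : ℕ) : ZMod (p ^ e)) = f ((m : ZMod (p ^ e))) := by
    intro m
    have h1 : m = m % (p ^ e) + (p ^ e) * (m / (p ^ e)) := (Nat.mod_add_div m _).symm
    have h2 : (p ^ e) ∣ F ((p ^ e) * (m / (p ^ e))) := (hFdvd _).mpr ⟨m / (p ^ e), rfl⟩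
    have h3 : ((F ((p ^ e) * (m / (p ^ e))) : ℕ) : ZMod (p ^ e)) = 0 :=
      (ZMod.natCast_eq_zero_iff _ _).mpr h2
    conv_lhs => rw [h1]
    rw [hFadd]
    push_cast
    rw [h3, mul_zero, add_zero, hfdef]
    simp [ZMod.val_natCast]
  have hinj : Function.Injective f := by
    have key : ∀ x y : ZMod (p ^ e), x.val ≤ y.val → f x = f y → x = y := by
      intro x y hle hfeq
      obtain ⟨d, hd⟩ : ∃ d, y.val = x.val + d := ⟨y.val - x.val, by omega⟩
      have hcu : IsUnit ((c : ℕ) : ZMod (p ^ e)) := by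
        rw [ZMod.isUnit_iff_coprime]
        have hco : Nat.Coprime (p + 1) p := by
          rw [Nat.Coprime, Nat.gcd_self_add_left, Nat.gcd_one_left]
        exact hco.pow j e
      have h : ((F x.val : ℕ) : ZMod (p ^ e)) = ((F y.val : ℕ) : ZMod (p ^ e)) := hfeq
      rw [hd, hFadd] at h
      push_cast at h
      have h0 : ((c : ℕ) : ZMod (p ^ e)) ^ x.val * ((F d : ℕ) : ZMod (p ^ e)) = 0 := by
        linear_combination h.symm
      have hFd0 : ((F d : ℕ) : ZMod (p ^ e)) = 0 :=
        ((hcu.pow x.val).mul_right_eq_zero).mp h0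
      have hdvd : p ^ e ∣ d := (hFdvd d).mp ((ZMod.natCast_eq_zero_iff _ _).mp hFd0)
      have hyN : y.val < p ^ e := y.val_lt
      have hd0 : d = 0 := by
        rcases hdvd with ⟨k, rfl⟩
        rcases Nat.eq_zero_or_pos k with rfl | hk
        · simp
        · exfalso
          have : p ^ e ≤ p ^ e * k := Nat.le_mul_of_pos_right _ hk
          omega
      have : x.val = y.val := by omega
      exact ZMod.val_injective _ this
    intro x y h
    rcases le_total x.val y.val with hle | hle
    · exact key x y hle h
    · exact (key y x hle h.symm).symm
  have hbij : Function.Bijective f := Finite.injective_iff_bijective.mp hinj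
  refine ⟨Equiv.ofBijective f hbij, ?_, ?_, ?_⟩
  · intro x
    show ((F x.val : ℕ) : ZMod (p ^ e)) = _
    simp only [hFdef, hcdef]
    push_cast
    exact Finset.sum_congr rfl fun i _ => by rw [← pow_mul, mul_comm j i]
  · show f 0 = 0
    simp [hfdef, hFdef, ZMod.val_zero]
  · have hstep : ∀ x : ZMod (p ^ e), f (1 + x) = 1 + ((c : ℕ) : ZMod (p ^ e)) * f x := by
      intro x
      have hx : ((x.val : ℕ) : ZMod (p ^ e)) = x := by
        simp [ZMod.natCast_val, ZMod.cast_id]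
      have h1 : (1 : ZMod (p ^ e)) + x = (((x.val + 1 : ℕ)) : ZMod (p ^ e)) := by
        push_cast [hx]; ring
      rw [h1, ← hcast]
      have h2 : F (x.val + 1) = c * F x.val + 1 := by
        simp only [hFdef]; exact geom_sum_succ
      rw [h2]
      push_cast
      ring
    have haj : ∀ (n : ℕ) (w : ZMod (p ^ e)), (a ^ n) w = ((p : ZMod (p ^ e)) + 1) ^ n * w := by
      intro n
      induction n with
      | zero => simp
      | succ n ih =>
        intro w
        rw [pow_succ, Equiv.Perm.mul_apply, ha, ih]
        ring
    have hcc : ((c : ℕ) : ZMod (p ^ e)) = ((p : ZMod (p ^ e)) + 1) ^ j := by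
      rw [hcdef]; push_cast; ring
    rw [mul_inv_eq_iff_eq_mul]
    ext x
    simp only [Equiv.Perm.mul_apply, Equiv.coe_addLeft, Equiv.ofBijective_apply]
    rw [hstep x, haj, hcc]
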